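/- Let H = lp E 2, let p ∈ [1,∞] with conjugate exponent q, and let X : [0,1] → B(H) be strongly measurable with finite L^p-norm κ. Then: (i) for all i, j ∈ ℕ the map u ↦ π_i ∘ X_u ∘ ι_j is strongly measurable and its L^p-norm is at most κ; (ii) for each t ∈ [0,1] and all i, j, the map Y_t^{ij} : E j → E i defined by Y_t^{ij} x = ∫₀ᵗ π_i(X_u(ι_j x)) du is a bounded operator with ‖Y_t^{ij}‖ ≤ t^{1/q} κ; (iii) for every ψ ∈ H the map u ↦ X_u ψ is Bochner integrable on [0,t], the map ψ ↦ ∫₀ᵗ X_u ψ du is a bounded operator on H of norm at most t^{1/q} κ, and for every i the series Σ_{j=0}^∞ Y_t^{ij}(π_j ψ) converges in E i to π_i(∫₀ᵗ X_u ψ du). (The paper's theorem on entrywise integration of operator-valued processes on a Hilbert sum.) -/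

import Mathlib

open MeasureTheory Filter
open scoped ENNReal NNReal

/-- The canonical isometric inclusion `ι_i : E i → lp E 2` as a continuous linear map. -/
noncomputable def lpIncl (E : ℕ → Type*) [∀ i, NormedAddCommGroup (E i)]
    [∀ i, InnerProductSpace ℂ (E i)] (i : ℕ) : E i →L[ℂ] lp E 2 :=
  LinearMap.mkContinuous
    { toFun := fun a => lp.single 2 i a
      map_add' := fun a b => by
        refine lp.ext (funext fun j => ?_)
        by_cases hj : j = i
        · subst hj
          simp [lp.single_apply_self]
        · simp [lp.single_apply_ne _ _ _ hj]
      map_smul' := fun c a => by simpa using lp.single_smul 2 i a c }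
    1 (fun a => by
      have h := lp.norm_single (E := E) (p := 2) (by norm_num) i a
      simp [h])

/-- The canonical coordinate projection `π_i : lp E 2 → E i` as a continuous linear map. -/
noncomputable def lpProj (E : ℕ → Type*) [∀ i, NormedAddCommGroup (E i)]
    [∀ i, InnerProductSpace ℂ (E i)] (i : ℕ) : lp E 2 →L[ℂ] E i :=
  LinearMap.mkContinuous
    { toFun := fun ψ => ψ i
      map_add' := fun ψ φ => rfl
      map_smul' := fun c ψ => rfl }
    1 (fun ψ => by
      simp only [one_mul]
      exact lp.norm_apply_le_norm (E := E) (p := 2) (by norm_num) ψ i)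

/-- The `(i,j)` chaos-matrix entry `T^i_j = π_i ∘ T ∘ ι_j` of a bounded operator on `lp E 2`. -/
noncomputable def lpEntry {E : ℕ → Type*} [∀ i, NormedAddCommGroup (E i)]
    [∀ i, InnerProductSpace ℂ (E i)] (T : lp E 2 →L[ℂ] lp E 2) (i j : ℕ) : E j →L[ℂ] E i :=
  (lpProj E i).comp (T.comp (lpIncl E j))

/-- Lebesgue measure on the time interval `[0,1]`, viewed as a measure on the subtype. -/
noncomputable def muIcc : Measure (Set.Icc (0:ℝ) 1) :=
  Measure.comap Subtype.val volume

section Aux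

variable {E : ℕ → Type*} [∀ i, NormedAddCommGroup (E i)] [∀ i, InnerProductSpace ℂ (E i)]

lemma norm_lpIncl_apply (j : ℕ) (x : E j) : ‖lpIncl E j x‖ = ‖x‖ := by
  have h := lp.norm_single (E := E) (p := 2) (by norm_num) j x
  exact h

lemma lpProj_apply (i : ℕ) (ψ : lp E 2) : lpProj E i ψ = ψ i := rfl

lemma norm_lpEntry_apply_le (T : lp E 2 →L[ℂ] lp E 2) (i j : ℕ) (x : E j) :
    ‖lpEntry T i j x‖ ≤ ‖T‖ * ‖x‖ := by
  have h1 : ‖lpEntry T i j x‖ ≤ ‖T (lpIncl E j x)‖ := by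
    exact lp.norm_apply_le_norm (E := E) (p := 2) (by norm_num) (T (lpIncl E j x)) i
  calc ‖lpEntry T i j x‖ ≤ ‖T (lpIncl E j x)‖ := h1
    _ ≤ ‖T‖ * ‖lpIncl E j x‖ := T.le_opNorm _
    _ = ‖T‖ * ‖x‖ := by rw [norm_lpIncl_apply]

lemma norm_lpEntry_le (T : lp E 2 →L[ℂ] lp E 2) (i j : ℕ) : ‖lpEntry T i j‖ ≤ ‖T‖ :=
  ContinuousLinearMap.opNorm_le_bound _ (norm_nonneg T) (norm_lpEntry_apply_le T i j)

end Aux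

/-- The basic `L^p`-`L^1` estimate on a finite measure space. -/
lemma aux_integrable_and_le {α : Type*} [MeasurableSpace α] (μ : Measure α)
    (hμfin : μ Set.univ ≠ ∞) {F : Type*} [NormedAddCommGroup F] [NormedSpace ℝ F]
    {p : ℝ≥0∞} (hp : 1 ≤ p) {f : α → F} (hf : AEStronglyMeasurable f μ)
    {C : ℝ≥0} (hfp : eLpNorm f p μ ≤ C) :
    Integrable f μ ∧
      ‖∫ a, f a ∂μ‖ ≤ (μ Set.univ).toReal ^ (1 - 1 / p.toReal) * C := by
  have hexp : (0:ℝ) ≤ 1 - 1 / p.toReal := by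
    rcases eq_or_ne p ∞ with hp' | hp'
    · simp [hp']
    · have h1 : (1:ℝ) ≤ p.toReal := by
        rw [← ENNReal.toReal_one]
        exact ENNReal.toReal_mono hp' hp
      have : 1 / p.toReal ≤ 1 := by
        rw [div_le_one (by linarith)]; linarith
      linarith
  have h1 : eLpNorm f 1 μ ≤ (C : ℝ≥0∞) * μ Set.univ ^ (1 - 1 / p.toReal) := by
    have := eLpNorm_le_eLpNorm_mul_rpow_measure_univ (μ := μ) hp hf
    simp only [ENNReal.toReal_one, one_div_one] at this
    exact this.trans (by gcongr)
  have hfin : (C : ℝ≥0∞) * μ Set.univ ^ (1 - 1 / p.toReal) ≠ ∞ :=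
    ENNReal.mul_ne_top ENNReal.coe_ne_top (ENNReal.rpow_ne_top_of_nonneg hexp hμfin)
  have hint : Integrable f μ := by
    rw [← memLp_one_iff_integrable]
    exact ⟨hf, lt_of_le_of_lt h1 (lt_top_iff_ne_top.2 hfin)⟩
  refine ⟨hint, ?_⟩
  calc ‖∫ a, f a ∂μ‖ ≤ ∫ a, ‖f a‖ ∂μ := norm_integral_le_integral_norm f
    _ = (eLpNorm f 1 μ).toReal := by
        rw [integral_norm_eq_lintegral_enorm hf, eLpNorm_one_eq_lintegral_enorm]
    _ ≤ ((C : ℝ≥0∞) * μ Set.univ ^ (1 - 1 / p.toReal)).toReal := ENNReal.toReal_mono hfin h1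
    _ = (μ Set.univ).toReal ^ (1 - 1 / p.toReal) * C := by
        rw [ENNReal.toReal_mul, ← ENNReal.toReal_rpow, mul_comm]
        simp

lemma aux_main {α : Type*} [MeasurableSpace α] {μ : Measure α}
    (hμfin : μ Set.univ ≠ ∞) {F : Type*} [NormedAddCommGroup F] [NormedSpace ℝ F]
    {p : ℝ≥0∞} (hp : 1 ≤ p) {f : α → F} (hf : AEStronglyMeasurable f μ)
    {g : α → ℝ} {κ : ℝ≥0} (hg : eLpNorm g p μ ≤ κ) {c : ℝ} (hc : 0 ≤ c)
    (hb : ∀ u, ‖f u‖ ≤ g u * c) :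
    Integrable f μ ∧
      ‖∫ a, f a ∂μ‖ ≤ (μ Set.univ).toReal ^ (1 - 1 / p.toReal) * (κ * c) := by
  have hc' : ‖c‖₊ = (⟨c, hc⟩ : ℝ≥0) := Real.nnnorm_of_nonneg hc
  have h1 : eLpNorm f p μ ≤ ((κ * ⟨c, hc⟩ : ℝ≥0) : ℝ≥0∞) := by
    have h2 : eLpNorm f p μ ≤ eLpNorm (c • g) p μ :=
      eLpNorm_mono_real fun u => by
        simpa [smul_eq_mul, mul_comm c (g u)] using hb u
    rw [eLpNorm_const_smul, enorm_eq_nnnorm] at h2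
    refine h2.trans ?_
    calc _ ≤ ((κ * ‖c‖₊ : ℝ≥0) : ℝ≥0∞) := by
          rw [ENNReal.coe_mul, mul_comm]
          exact mul_le_mul_left hg _
      _ = _ := by rw [hc']
  have h := aux_integrable_and_le μ hμfin hp hf h1
  refine ⟨h.1, h.2.trans (le_of_eq rfl)⟩

/-- Entrywise integration of an operator-valued process `X ∈ L^p([0,1], B(H)_so)` on the
Hilbert sum `H = lp E 2`, with `L^p`-norm at most `κ` and conjugate exponent `q`:
(i) each entry process `u ↦ X_u{}^i_j` is strongly measurable with `L^p`-norm at most `κ`;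
(ii) each entrywise indefinite integral `Y_t{}^i_j` is a bounded operator of norm at most
`t^{1/q} κ`; (iii) `u ↦ X_u ψ` is Bochner integrable on `[0,t]`, the indefinite integral is
a bounded operator of norm at most `t^{1/q} κ`, and `Σ_j Y_t{}^i_j (π_j ψ)` converges to
`π_i (∫₀ᵗ X_u ψ du)`. -/
theorem entrywise_integration
    {E : ℕ → Type*} [∀ i, NormedAddCommGroup (E i)] [∀ i, InnerProductSpace ℂ (E i)]
    [∀ i, CompleteSpace (E i)]
    (p q : ℝ≥0∞) (hp : 1 ≤ p) (hpq : 1/p + 1/q = 1)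
    (X : Set.Icc (0:ℝ) 1 → (lp E 2 →L[ℂ] lp E 2))
    (hmeas : ∀ ψ : lp E 2, StronglyMeasurable fun u => X u ψ)
    (κ : ℝ≥0) (hκ : eLpNorm (fun u => ‖X u‖) p muIcc ≤ κ) :
    (∀ i j : ℕ,
      (∀ x : E j, StronglyMeasurable fun u => lpEntry (X u) i j x) ∧
      eLpNorm (fun u => ‖lpEntry (X u) i j‖) p muIcc ≤ κ) ∧
    (∀ (t : Set.Icc (0:ℝ) 1) (i j : ℕ) (x : E j),
      IntegrableOn (fun u => lpEntry (X u) i j x) (Set.Iic t) muIcc ∧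
      ‖∫ u in Set.Iic t, lpEntry (X u) i j x ∂muIcc‖ ≤ (t : ℝ) ^ ((1/q).toReal) * κ * ‖x‖) ∧
    (∀ (t : Set.Icc (0:ℝ) 1) (ψ : lp E 2),
      IntegrableOn (fun u => X u ψ) (Set.Iic t) muIcc ∧
      ‖∫ u in Set.Iic t, X u ψ ∂muIcc‖ ≤ (t : ℝ) ^ ((1/q).toReal) * κ * ‖ψ‖ ∧
      ∀ i : ℕ,
        Tendsto
          (fun N => ∑ j ∈ Finset.range N, ∫ u in Set.Iic t, lpEntry (X u) i j (ψ j) ∂muIcc)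
          atTop (nhds ((∫ u in Set.Iic t, X u ψ ∂muIcc) i))) := by
  classical
  -- exponent bookkeeping
  have hr : (1/q).toReal = 1 - 1 / p.toReal := by
    rcases eq_or_ne p ∞ with hp' | hp'
    · have hq1 : 1/q = 1 := by simpa [hp'] using hpq
      simp [hq1, hp']
    · have hp0 : p ≠ 0 := by
        intro h; rw [h] at hp; exact absurd hp (by simp)
      have h1p : 1/p ≤ 1 := by
        rw [one_div]
        exact ENNReal.inv_le_one.2 hp
      have h1pne : 1/p ≠ ∞ := by
        rw [one_div]
        exact ENNReal.inv_ne_top.2 hp0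
      have hq : 1/q = 1 - 1/p :=
        ENNReal.eq_sub_of_add_eq h1pne (by rw [add_comm]; exact hpq)
      rw [hq, ENNReal.toReal_sub_of_le h1p (by norm_num), ENNReal.toReal_one,
        one_div, one_div, ENNReal.toReal_inv]
  -- measure bookkeeping
  have hemb : MeasurableEmbedding (Subtype.val : Set.Icc (0:ℝ) 1 → ℝ) :=
    MeasurableEmbedding.subtype_coe measurableSet_Icc
  have hIic : ∀ t : Set.Icc (0:ℝ) 1, muIcc (Set.Iic t) = ENNReal.ofReal t := by
    intro t
    rw [muIcc, hemb.comap_apply]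
    have himg : (Subtype.val : Set.Icc (0:ℝ) 1 → ℝ) '' Set.Iic t = Set.Icc 0 (t:ℝ) := by
      ext x
      constructor
      · rintro ⟨⟨u, hu⟩, hle, rfl⟩
        exact ⟨hu.1, hle⟩
      · rintro ⟨h0, h1⟩
        exact ⟨⟨x, h0, h1.trans t.2.2⟩, h1, rfl⟩
    rw [himg, Real.volume_Icc, sub_zero]
  have hμt : ∀ t : Set.Icc (0:ℝ) 1,
      (muIcc.restrict (Set.Iic t)) Set.univ = ENNReal.ofReal t := fun t => by
    rw [Measure.restrict_apply_univ, hIic]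
  have hμtne : ∀ t : Set.Icc (0:ℝ) 1,
      (muIcc.restrict (Set.Iic t)) Set.univ ≠ ∞ := fun t => by
    rw [hμt]; exact ENNReal.ofReal_ne_top
  have hμtre : ∀ t : Set.Icc (0:ℝ) 1,
      ((muIcc.restrict (Set.Iic t)) Set.univ).toReal = (t:ℝ) := fun t => by
    rw [hμt, ENNReal.toReal_ofReal t.2.1]
  have hκt : ∀ t : Set.Icc (0:ℝ) 1,
      eLpNorm (fun u => ‖X u‖) p (muIcc.restrict (Set.Iic t)) ≤ κ := fun t =>
    (eLpNorm_mono_measure _ Measure.restrict_le_self).trans hκ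
  -- part (i)
  have part1 : ∀ i j : ℕ,
      (∀ x : E j, StronglyMeasurable fun u => lpEntry (X u) i j x) ∧
      eLpNorm (fun u => ‖lpEntry (X u) i j‖) p muIcc ≤ κ := by
    intro i j
    constructor
    · intro x
      exact (lpProj E i).continuous.comp_stronglyMeasurable (hmeas (lpIncl E j x))
    · refine le_trans (eLpNorm_mono_real fun u => ?_) hκ
      rw [Real.norm_of_nonneg (norm_nonneg _)]
      exact norm_lpEntry_le (X u) i j
  -- part (ii)
  have part2 : ∀ (t : Set.Icc (0:ℝ) 1) (i j : ℕ) (x : E j),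
      IntegrableOn (fun u => lpEntry (X u) i j x) (Set.Iic t) muIcc ∧
      ‖∫ u in Set.Iic t, lpEntry (X u) i j x ∂muIcc‖ ≤ (t : ℝ) ^ ((1/q).toReal) * κ * ‖x‖ := by
    intro t i j x
    have h := aux_main (hμtne t) hp ((part1 i j).1 x).aestronglyMeasurable (hκt t)
      (norm_nonneg x) (fun u => norm_lpEntry_apply_le (X u) i j x)
    refine ⟨h.1, ?_⟩
    rw [hμtre] at h
    calc ‖∫ u in Set.Iic t, lpEntry (X u) i j x ∂muIcc‖
        ≤ (t:ℝ) ^ (1 - 1 / p.toReal) * (κ * ‖x‖) := h.2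
      _ = (t : ℝ) ^ (1 - 1 / p.toReal) * κ * ‖x‖ := by ring
      _ = (t : ℝ) ^ ((1/q).toReal) * κ * ‖x‖ := by rw [hr]
  -- main estimate for (iii)
  have main : ∀ (t : Set.Icc (0:ℝ) 1) (φ : lp E 2),
      Integrable (fun u => X u φ) (muIcc.restrict (Set.Iic t)) ∧
      ‖∫ u in Set.Iic t, X u φ ∂muIcc‖ ≤ (t : ℝ) ^ ((1/q).toReal) * (κ * ‖φ‖) := by
    intro t φ
    have h := aux_main (hμtne t) hp (hmeas φ).aestronglyMeasurable (hκt t)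
      (norm_nonneg φ) (fun u => (X u).le_opNorm φ)
    rw [hμtre] at h
    refine ⟨h.1, ?_⟩
    rw [hr]
    exact h.2
  refine ⟨part1, part2, ?_⟩
  intro t ψ
  refine ⟨(main t ψ).1, ?_, ?_⟩
  · calc ‖∫ u in Set.Iic t, X u ψ ∂muIcc‖ ≤ (t:ℝ) ^ ((1/q).toReal) * (κ * ‖ψ‖) := (main t ψ).2
      _ = (t:ℝ) ^ ((1/q).toReal) * κ * ‖ψ‖ := by ring
  · intro i
    set μt := muIcc.restrict (Set.Iic t) with hμtdef
    set S : ℕ → lp E 2 := fun N => ∑ j ∈ Finset.range N, lpIncl E j (ψ j) with hSdef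
    have hS : Tendsto S atTop (nhds ψ) :=
      (lp.hasSum_single (by norm_num) ψ).tendsto_sum_nat
    have hdiff : Tendsto (fun N => ‖S N - ψ‖) atTop (nhds 0) :=
      tendsto_iff_norm_sub_tendsto_zero.1 hS
    have hIlim : Tendsto (fun N => ∫ u, X u (S N) ∂μt) atTop (nhds (∫ u, X u ψ ∂μt)) := by
      rw [tendsto_iff_norm_sub_tendsto_zero]
      have hb : ∀ N, ‖(∫ u, X u (S N) ∂μt) - ∫ u, X u ψ ∂μt‖
          ≤ ((t:ℝ) ^ ((1/q).toReal) * κ) * ‖S N - ψ‖ := by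
        intro N
        rw [← integral_sub (main t (S N)).1 (main t ψ).1]
        have he : (fun u => X u (S N) - X u ψ) = fun u => X u (S N - ψ) := by
          funext u; rw [map_sub]
        rw [he]
        calc ‖∫ u, X u (S N - ψ) ∂μt‖
            ≤ (t:ℝ) ^ ((1/q).toReal) * (κ * ‖S N - ψ‖) := (main t (S N - ψ)).2
          _ = ((t:ℝ) ^ ((1/q).toReal) * κ) * ‖S N - ψ‖ := by ring
      refine squeeze_zero (fun N => norm_nonneg _) hb ?_
      have := hdiff.const_mul ((t:ℝ) ^ ((1/q).toReal) * κ)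
      simpa using this
    have heq : ∀ N, ∑ j ∈ Finset.range N, (∫ u, lpEntry (X u) i j (ψ j) ∂μt)
        = lpProj E i (∫ u, X u (S N) ∂μt) := by
      intro N
      rw [← ContinuousLinearMap.integral_comp_comm (lpProj E i) (main t (S N)).1,
        ← integral_finset_sum _ (fun j _ => (part2 t i j (ψ j)).1)]
      congr 1
      funext u
      simp only [hSdef, map_sum]
      rfl
    have hcont := ((lpProj E i).continuous.tendsto (∫ u, X u ψ ∂μt)).comp hIlim
    exact Tendsto.congr (fun N => (heq N).symm) hcont
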